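/- Suppose I and I' are lexsegment ideals of S = K[x_1,…,x_n], generated by monomials of degree d and d' respectively, with μ(I) = μ(I') and d' ≥ d. Then I' = x_1^{d'−d} · I. -/

import Mathlib

noncomputable section

open MvPolynomial

/-- The total degree of an exponent vector. -/
def edeg {n : ℕ} (a : Fin n →₀ ℕ) : ℕ := ∑ i, a i

/-- An exponent vector is squarefree if every exponent is at most 1. -/
def IsSqfree {n : ℕ} (a : Fin n →₀ ℕ) : Prop := ∀ i, a i ≤ 1

/-- The set of exponent vectors of monomials belonging to the ideal `I`. -/
def expSet {K : Type} [Field K] {n : ℕ} (I : Ideal (MvPolynomial (Fin n) K)) :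
    Set (Fin n →₀ ℕ) := {a | (monomial a (1 : K)) ∈ I}

/-- `I` is generated by monomials `x^a` with `a` satisfying the predicate `P`. -/
def GenBy {K : Type} [Field K] {n : ℕ} (I : Ideal (MvPolynomial (Fin n) K))
    (P : (Fin n →₀ ℕ) → Prop) : Prop :=
  ∃ G : Set (Fin n →₀ ℕ), (∀ a ∈ G, P a) ∧
    I = Ideal.span ((fun a => (monomial a (1 : K))) '' G)

/-- `I` is a monomial ideal. -/
def IsMonomialIdeal {K : Type} [Field K] {n : ℕ} (I : Ideal (MvPolynomial (Fin n) K)) : Prop :=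
  GenBy I fun _ => True

/-- `I` is a squarefree monomial ideal. -/
def IsSqfreeMonomialIdeal {K : Type} [Field K] {n : ℕ}
    (I : Ideal (MvPolynomial (Fin n) K)) : Prop := GenBy I IsSqfree

/-- `x^a >_lex x^b` in the lexicographic order with `x_1 > x_2 > ⋯ > x_n`. -/
def lexGT {n : ℕ} (a b : Fin n →₀ ℕ) : Prop :=
  ∃ i : Fin n, (∀ j : Fin n, j < i → a j = b j) ∧ b i < a i

/-- `I` is a lexsegment ideal. -/
def IsLexsegment {K : Type} [Field K] {n : ℕ} (I : Ideal (MvPolynomial (Fin n) K)) : Prop :=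
  IsMonomialIdeal I ∧ ∀ a b : Fin n →₀ ℕ, (monomial a (1 : K)) ∈ I → edeg b = edeg a →
    lexGT b a → (monomial b (1 : K)) ∈ I

/-- `I` is a squarefree lexsegment ideal. -/
def IsSqfreeLexsegment {K : Type} [Field K] {n : ℕ}
    (I : Ideal (MvPolynomial (Fin n) K)) : Prop :=
  IsSqfreeMonomialIdeal I ∧ ∀ a b : Fin n →₀ ℕ, IsSqfree a → IsSqfree b →
    (monomial a (1 : K)) ∈ I → edeg b = edeg a → lexGT b a → (monomial b (1 : K)) ∈ I

/-- The minimal number of generators of an ideal. -/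
def mu {K : Type} [Field K] {n : ℕ} (I : Ideal (MvPolynomial (Fin n) K)) : ℕ :=
  sInf {m | ∃ G : Finset (MvPolynomial (Fin n) K), G.card = m ∧ I = Ideal.span (G : Set _)}

/-- `ξ_k = ∑_{j=1}^k C(2j-1, j)`. -/
def xi (k : ℕ) : ℕ := ∑ j ∈ Finset.Icc 1 k, (2 * j - 1).choose j

/-- The Hilbert function of `I`: the `K`-dimension of the degree-`j` component of `I`. -/
def hilb {K : Type} [Field K] {n : ℕ} (I : Ideal (MvPolynomial (Fin n) K)) (j : ℕ) : ℕ :=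
  Module.finrank K ↥((Submodule.restrictScalars K I) ⊓ homogeneousSubmodule (Fin n) K j)

/-- The Hilbert function of `I` extended to all integer degrees. -/
def hilbZ {K : Type} [Field K] {n : ℕ} (I : Ideal (MvPolynomial (Fin n) K)) (j : ℤ) : ℕ :=
  if 0 ≤ j then hilb I j.toNat else 0

/-- The Hilbert function of a standard graded polynomial ring in `d` variables,
at degree `t ∈ ℤ`. -/
def polyHilb (d : ℕ) (t : ℤ) : ℕ :=
  if t < 0 then 0 else if d = 0 then (if t = 0 then 1 else 0) else (t.toNat + (d - 1)).choose (d - 1)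

/-- A (standard graded) Hilbert decomposition of `I` all of whose retracts are polynomial
rings in at least `k` variables: `I ≅ ⊕ᵢ Sᵢ(-sᵢ)` as graded `K`-vector spaces, where `Sᵢ`
is a graded algebra retract of `S`, i.e. a polynomial ring in `dd i ≥ k` variables. -/
def HilbertDecomp1 {K : Type} [Field K] {n : ℕ} (I : Ideal (MvPolynomial (Fin n) K))
    (k : ℕ) : Prop :=
  ∃ (ι : Type) (_ : Fintype ι) (dd : ι → ℕ) (s : ι → ℤ),
    (∀ i, k ≤ dd i) ∧ ∀ j : ℤ, hilbZ I j = ∑ i, polyHilb (dd i) (j - s i)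

/-- The Hilbert depth of `I` in the standard graded sense. -/
def hdepth1 {K : Type} [Field K] {n : ℕ} (I : Ideal (MvPolynomial (Fin n) K)) : ℕ∞ :=
  sSup {k : ℕ∞ | ∃ m : ℕ, HilbertDecomp1 I m ∧ k = m}

/-- The set of exponent vectors `u + ℕ^Z`, corresponding to the Stanley space `x^u K[Z]`. -/
def cone {n : ℕ} (u : Fin n →₀ ℕ) (Z : Finset (Fin n)) : Set (Fin n →₀ ℕ) :=
  {a | (∀ j, u j ≤ a j) ∧ ∀ j ∉ Z, a j = u j}

/-- A Stanley decomposition, with all Stanley spaces of dimension at least `k`, of the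
`ℤⁿ`-graded module whose monomial basis has exponent set `A`. -/
def StanleyPartN {n : ℕ} (A : Set (Fin n →₀ ℕ)) (k : ℕ) : Prop :=
  ∃ (ι : Type) (_ : Fintype ι) (u : ι → (Fin n →₀ ℕ)) (Z : ι → Finset (Fin n)),
    (∀ i, k ≤ (Z i).card) ∧ (∀ i, cone (u i) (Z i) ⊆ A) ∧
    (∀ a ∈ A, ∃! i, a ∈ cone (u i) (Z i))

/-- The multigraded Stanley depth of the `ℤⁿ`-graded module whose monomial basis has
exponent set `A`. -/
def sdepthN {n : ℕ} (A : Set (Fin n →₀ ℕ)) : ℕ∞ :=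
  sSup {k : ℕ∞ | ∃ m : ℕ, StanleyPartN A m ∧ k = m}

/-- A multigraded Hilbert decomposition of the monomial ideal `I`, with all retracts
polynomial rings in at least `k` variables: the multigraded Hilbert function of `I`
(which takes values 0 and 1) equals the sum of the multigraded Hilbert functions of
the shifted retracts `x^{u i} K[Z i]`. -/
def HilbertDecompN {K : Type} [Field K] {n : ℕ} (I : Ideal (MvPolynomial (Fin n) K))
    (k : ℕ) : Prop :=
  ∃ (ι : Type) (_ : Fintype ι) (u : ι → (Fin n →₀ ℕ)) (Z : ι → Finset (Fin n)),
    (∀ i, k ≤ (Z i).card) ∧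
    (∀ a : Fin n →₀ ℕ, (a ∈ expSet I ↔ ∃ i, a ∈ cone (u i) (Z i)) ∧
      (∀ i i', a ∈ cone (u i) (Z i) → a ∈ cone (u i') (Z i') → i = i'))

/-- The multigraded Hilbert depth of a monomial ideal `I`. -/
def hdepthN {K : Type} [Field K] {n : ℕ} (I : Ideal (MvPolynomial (Fin n) K)) : ℕ∞ :=
  sSup {k : ℕ∞ | ∃ m : ℕ, HilbertDecompN I m ∧ k = m}

/-- The graded maximal ideal `(x_1, …, x_n)`. -/
def maxIdeal (K : Type) [Field K] (n : ℕ) : Ideal (MvPolynomial (Fin n) K) :=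
  Ideal.span (Set.range X)

/-- The depth of a module `M` over `S = K[x_1,…,x_n]` with respect to the graded maximal
ideal: the supremum of lengths of `M`-regular sequences in `(x_1,…,x_n)`. -/
def mdepth (K : Type) [Field K] (n : ℕ) (M : Type)
    [AddCommGroup M] [Module (MvPolynomial (Fin n) K) M] : ℕ∞ :=
  sSup {k : ℕ∞ | ∃ rs : List (MvPolynomial (Fin n) K),
    (∀ r ∈ rs, r ∈ maxIdeal K n) ∧ RingTheory.Sequence.IsRegular M rs ∧ k = rs.length}

/-- The quotient module `I/J` for ideals `J ≤ I`. -/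
def quotMod {K : Type} [Field K] {n : ℕ} (I J : Ideal (MvPolynomial (Fin n) K)) : Type :=
  ↥I ⧸ (Submodule.comap (Submodule.subtype I) J)

instance {K : Type} [Field K] {n : ℕ} (I J : Ideal (MvPolynomial (Fin n) K)) :
    AddCommGroup (quotMod I J) := by unfold quotMod; infer_instance

instance {K : Type} [Field K] {n : ℕ} (I J : Ideal (MvPolynomial (Fin n) K)) :
    Module (MvPolynomial (Fin n) K) (quotMod I J) := by unfold quotMod; infer_instance

/-- `ρ_j(I\J)`: the number of squarefree monomials of degree `j` in `I ∖ J`. -/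
def rho {K : Type} [Field K] {n : ℕ} (I J : Ideal (MvPolynomial (Fin n) K)) (j : ℕ) : ℕ :=
  Set.ncard {a : Fin n →₀ ℕ | IsSqfree a ∧ edeg a = j ∧ a ∈ expSet I ∧ a ∉ expSet J}

/-- `ρ_j(I)`: the number of squarefree monomials of degree `j` in `I`. -/
def rhoI {K : Type} [Field K] {n : ℕ} (I : Ideal (MvPolynomial (Fin n) K)) (j : ℕ) : ℕ :=
  Set.ncard {a : Fin n →₀ ℕ | IsSqfree a ∧ edeg a = j ∧ a ∈ expSet I}

/-- `I` is a stable monomial ideal. Here `j` plays the role of `m(u)`, the largest index of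
a variable dividing `u = x^a`. -/
def IsStable {K : Type} [Field K] {n : ℕ} (I : Ideal (MvPolynomial (Fin n) K)) : Prop :=
  IsMonomialIdeal I ∧ ∀ a : Fin n →₀ ℕ, (monomial a (1 : K)) ∈ I →
    ∀ j : Fin n, a j ≠ 0 → (∀ l, j < l → a l = 0) → ∀ i, i < j →
      (monomial (a + Finsupp.single i 1 - Finsupp.single j 1) (1 : K)) ∈ I

/-- `I` is a squarefree stable monomial ideal. -/
def IsSqfreeStable {K : Type} [Field K] {n : ℕ} (I : Ideal (MvPolynomial (Fin n) K)) : Prop :=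
  IsSqfreeMonomialIdeal I ∧ ∀ a : Fin n →₀ ℕ, IsSqfree a → (monomial a (1 : K)) ∈ I →
    ∀ j : Fin n, a j ≠ 0 → (∀ l, j < l → a l = 0) → ∀ i, i < j → a i = 0 →
      (monomial (a + Finsupp.single i 1 - Finsupp.single j 1) (1 : K)) ∈ I

/-- `I` is a squarefree strongly stable monomial ideal. -/
def IsSqfreeStronglyStable {K : Type} [Field K] {n : ℕ}
    (I : Ideal (MvPolynomial (Fin n) K)) : Prop :=
  IsSqfreeMonomialIdeal I ∧ ∀ a : Fin n →₀ ℕ, IsSqfree a → (monomial a (1 : K)) ∈ I →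
    ∀ i : Fin n, a i ≠ 0 → ∀ j, j < i → a j = 0 →
      (monomial (a + Finsupp.single j 1 - Finsupp.single i 1) (1 : K)) ∈ I

/-- The exponent vectors of the minimal monomial generators of a monomial ideal:
the monomials of `I` minimal with respect to divisibility. -/
def minGens {K : Type} [Field K] {n : ℕ} (I : Ideal (MvPolynomial (Fin n) K)) :
    Set (Fin n →₀ ℕ) := {a | a ∈ expSet I ∧ ∀ b ∈ expSet I, b ≤ a → b = a}

/-- `m(u)`: the largest index (1-based) of a variable dividing `x^a`; `0` if `a = 0`. -/
def mvar {n : ℕ} (a : Fin n →₀ ℕ) : ℕ := a.support.sup (fun i => (i : ℕ) + 1)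

/-- `m(I) = max { m(u) : u ∈ G(I) }`. -/
def mIdeal {K : Type} [Field K] {n : ℕ} (I : Ideal (MvPolynomial (Fin n) K)) : ℕ :=
  sSup {m | ∃ a ∈ minGens I, m = mvar a}

open MvPolynomial

/-- The `K`-subspace `Aᵢ·xᵢ` of `S`, where `Aᵢ` is the subalgebra generated by `B`. -/
def stSpace {K : Type} [Field K] {n : ℕ} (B : Finset (MvPolynomial (Fin n) K))
    (x : MvPolynomial (Fin n) K) : Submodule K (MvPolynomial (Fin n) K) :=
  (Subalgebra.toSubmodule (Algebra.adjoin K (B : Set (MvPolynomial (Fin n) K)))).map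
    (LinearMap.mulLeft K x)

/-- A standard graded Stanley decomposition of the ideal `I` with all Stanley spaces of
depth at least `k`: a finite family of graded algebra retracts `Sᵢ = K[Bᵢ]` (generated by
`k ≤ |Bᵢ|` linearly independent linear forms) and homogeneous elements `xᵢ ∈ I` with
`Sᵢ ∩ ann(xᵢ) = 0`, such that `I = ⊕ᵢ Sᵢ xᵢ` as graded `K`-vector spaces. -/
def StanleyDecomp1 {K : Type} [Field K] {n : ℕ} (I : Ideal (MvPolynomial (Fin n) K))
    (k : ℕ) : Prop :=
  ∃ (ι : Type) (_ : Fintype ι) (B : ι → Finset (MvPolynomial (Fin n) K))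
    (x : ι → MvPolynomial (Fin n) K) (d : ι → ℕ),
      (∀ i, ∀ b ∈ B i, b ∈ homogeneousSubmodule (Fin n) K 1) ∧
      (∀ i, LinearIndependent K (fun b : (B i : Set (MvPolynomial (Fin n) K)) =>
        (b : MvPolynomial (Fin n) K))) ∧
      (∀ i, k ≤ (B i).card) ∧
      (∀ i, x i ∈ I) ∧
      (∀ i, x i ∈ homogeneousSubmodule (Fin n) K (d i)) ∧
      (∀ i, ∀ a ∈ Algebra.adjoin K ((B i : Set (MvPolynomial (Fin n) K))),
        a * x i = 0 → a = 0) ∧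
      (iSup (fun i => stSpace (B i) (x i)) = Submodule.restrictScalars K I) ∧
      (iSupIndep fun i => stSpace (B i) (x i))

/-- The standard graded Stanley depth of `I`. -/
def sdepth1 {K : Type} [Field K] {n : ℕ} (I : Ideal (MvPolynomial (Fin n) K)) : ℕ∞ :=
  sSup {k : ℕ∞ | ∃ m : ℕ, StanleyDecomp1 I m ∧ k = m}

/-- The subspace `S₁ · V` of `S`. -/
def mulS1 {K : Type} [Field K] {n : ℕ} (V : Submodule K (MvPolynomial (Fin n) K)) :
    Submodule K (MvPolynomial (Fin n) K) :=
  Submodule.span K {p | ∃ l ∈ homogeneousSubmodule (Fin n) K 1, ∃ v ∈ V, p = l * v}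

/-- A lexsegment set of monomials of degree `d`. -/
def IsLexSet {n : ℕ} (d : ℕ) (L : Set (Fin n →₀ ℕ)) : Prop :=
  (∀ a ∈ L, edeg a = d) ∧ ∀ a ∈ L, ∀ b : Fin n →₀ ℕ, edeg b = d → lexGT b a → b ∈ L

/-- `V ⊆ S_d` is a Gotzmann space: `dim_K (S₁·V) = dim_K (S₁·lex(V))`, where `lex(V)` is
spanned by the lexsegment set of monomials of degree `d` of cardinality `dim_K V`. -/
def IsGotzmannSpace {K : Type} [Field K] {n : ℕ} (d : ℕ)
    (V : Submodule K (MvPolynomial (Fin n) K)) : Prop :=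
  ∃ L : Finset (Fin n →₀ ℕ), IsLexSet (n := n) d (L : Set (Fin n →₀ ℕ)) ∧ L.card = Module.finrank K ↥V ∧
    Module.finrank K ↥(mulS1 V) =
      Module.finrank K ↥(mulS1 (Submodule.span K
        ((fun a => (monomial a (1 : K))) '' (L : Set (Fin n →₀ ℕ)))))

/-- `I` is a homogeneous ideal in the standard grading. -/
def IsHomogeneousIdeal {K : Type} [Field K] {n : ℕ}
    (I : Ideal (MvPolynomial (Fin n) K)) : Prop :=
  ∀ p ∈ I, ∀ k : ℕ, homogeneousComponent k p ∈ I

/-- `I` is a Gotzmann ideal: each homogeneous component `I_k` is a Gotzmann space. -/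
def IsGotzmannIdeal {K : Type} [Field K] {n : ℕ}
    (I : Ideal (MvPolynomial (Fin n) K)) : Prop :=
  IsHomogeneousIdeal I ∧ ∀ k : ℕ,
    IsGotzmannSpace k ((Submodule.restrictScalars K I) ⊓ homogeneousSubmodule (Fin n) K k)

/-- `I` is generated by homogeneous elements of degree `d`. -/
def GenInDegHomog {K : Type} [Field K] {n : ℕ} (I : Ideal (MvPolynomial (Fin n) K))
    (d : ℕ) : Prop :=
  ∃ G : Set (MvPolynomial (Fin n) K), (∀ g ∈ G, g ∈ homogeneousSubmodule (Fin n) K d) ∧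
    I = Ideal.span G

-- ===== helpers =====

lemma edeg_eq_degree {n : ℕ} (a : Fin n →₀ ℕ) : a.degree = edeg a := by
  rw [Finsupp.degree, edeg]
  apply Finset.sum_subset (Finset.subset_univ _)
  intro i _ h
  exact Finsupp.notMem_support_iff.mp h

lemma edeg_add {n : ℕ} (a b : Fin n →₀ ℕ) : edeg (a + b) = edeg a + edeg b := by
  simp [edeg, Finset.sum_add_distrib]

lemma edeg_mono {n : ℕ} {a b : Fin n →₀ ℕ} (h : a ≤ b) : edeg a ≤ edeg b :=
  Finset.sum_le_sum fun i _ => Finsupp.le_def.mp h i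

lemma edeg_eq_zero {n : ℕ} {a : Fin n →₀ ℕ} (h : edeg a = 0) : a = 0 := by
  rw [edeg, Finset.sum_eq_zero_iff] at h
  exact Finsupp.ext fun i => h i (Finset.mem_univ i)

lemma edeg_single {n : ℕ} (i : Fin n) (k : ℕ) : edeg (Finsupp.single i k) = k := by
  rw [edeg]
  rw [Finset.sum_eq_single i]
  · simp
  · intro j _ hj; simp [Finsupp.single_apply, (Ne.symm hj)]
  · simp

lemma lex_trichotomy {n : ℕ} {a b : Fin n →₀ ℕ} (h : a ≠ b) : lexGT a b ∨ lexGT b a := by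
  classical
  have hs : (Finset.univ.filter fun i : Fin n => a i ≠ b i).Nonempty := by
    rw [Finset.filter_nonempty_iff]
    by_contra hc
    push_neg at hc
    exact h (Finsupp.ext fun i => hc i (Finset.mem_univ i))
  set s := Finset.univ.filter fun i : Fin n => a i ≠ b i with hsdef
  set i := s.min' hs with hi
  have hne : a i ≠ b i := (Finset.mem_filter.mp (s.min'_mem hs)).2
  have hlt : ∀ j, j < i → a j = b j := by
    intro j hj
    by_contra hj'
    exact absurd hj (not_lt.mpr (s.min'_le j (Finset.mem_filter.mpr ⟨Finset.mem_univ j, hj'⟩)))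
  rcases lt_or_gt_of_ne hne with h1 | h1
  · exact Or.inr ⟨i, fun j hj => (hlt j hj).symm, h1⟩
  · exact Or.inl ⟨i, hlt, h1⟩

lemma finite_edeg_eq {n : ℕ} (d : ℕ) : {a : Fin n →₀ ℕ | edeg a = d}.Finite := by
  have hsub : {a : Fin n →₀ ℕ | edeg a = d} ⊆
      Set.Iic (Finsupp.equivFunOnFinite.symm fun _ => d) := by
    intro a ha
    rw [Set.mem_Iic, Finsupp.le_def]
    intro i
    have : a i ≤ edeg a := Finset.single_le_sum (f := fun j => a j)
      (fun _ _ => Nat.zero_le _) (Finset.mem_univ i)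
    simpa using this.trans_eq ha
  exact (Set.finite_Iic _).subset hsub

lemma upper_eq {n d : ℕ} {U V : Set (Fin n →₀ ℕ)}
    (hUd : ∀ a ∈ U, edeg a = d) (hVd : ∀ a ∈ V, edeg a = d)
    (hU : ∀ a ∈ U, ∀ b, edeg b = d → lexGT b a → b ∈ U)
    (hV : ∀ a ∈ V, ∀ b, edeg b = d → lexGT b a → b ∈ V)
    (hcard : U.ncard = V.ncard) : U = V := by
  have hUfin : U.Finite := (finite_edeg_eq d).subset hUd
  have hVfin : V.Finite := (finite_edeg_eq d).subset hVd
  have hsub : U ⊆ V ∨ V ⊆ U := by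
    by_contra hc
    push_neg at hc
    obtain ⟨u, hu, huV⟩ := Set.not_subset.mp hc.1
    obtain ⟨v, hv, hvU⟩ := Set.not_subset.mp hc.2
    have huv : u ≠ v := fun he => huV (he ▸ hv)
    rcases lex_trichotomy huv with h1 | h1
    · exact huV (hV v hv u (hUd u hu) h1)
    · exact hvU (hU u hu v (hVd v hv) h1)
  rcases hsub with h | h
  · exact Set.eq_of_subset_of_ncard_le h hcard.ge hVfin
  · exact (Set.eq_of_subset_of_ncard_le h hcard.le hUfin).symm

-- ===== the ideal of polynomials with vanishing coefficients below degree d =====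

def lowVanish (K : Type) [Field K] (n d : ℕ) : Ideal (MvPolynomial (Fin n) K) where
  carrier := {p | ∀ b : Fin n →₀ ℕ, edeg b < d → coeff b p = 0}
  add_mem' := fun hp hq b hb => by rw [coeff_add, hp b hb, hq b hb, add_zero]
  zero_mem' := fun b _ => coeff_zero b
  smul_mem' := fun c p hp => by
    intro b hb
    classical
    rw [smul_eq_mul, coeff_mul]
    apply Finset.sum_eq_zero
    rintro ⟨u, v⟩ huv
    rw [Finset.HasAntidiagonal.mem_antidiagonal] at huv
    have hv : edeg v < d :=
      lt_of_le_of_lt (edeg_mono (by rw [← huv]; exact le_add_self)) hb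
    rw [hp v hv, mul_zero]

lemma mem_lowVanish {K : Type} [Field K] {n d : ℕ} {p : MvPolynomial (Fin n) K} :
    p ∈ lowVanish K n d ↔ ∀ b : Fin n →₀ ℕ, edeg b < d → coeff b p = 0 := Iff.rfl

lemma homComp_mul_lowVanish {K : Type} [Field K] {n d : ℕ}
    (c f : MvPolynomial (Fin n) K) (hf : f ∈ lowVanish K n d) :
    homogeneousComponent d (c * f) = (coeff 0 c) • homogeneousComponent d f := by
  classical
  ext b
  rw [coeff_homogeneousComponent, coeff_smul, coeff_homogeneousComponent]
  by_cases hb : b.degree = d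
  · rw [if_pos hb, if_pos hb, coeff_mul]
    rw [Finset.sum_eq_single ((0 : Fin n →₀ ℕ), b)]
    · rw [smul_eq_mul]
    · rintro ⟨u, v⟩ huv hne
      rw [Finset.HasAntidiagonal.mem_antidiagonal] at huv
      have hu : u ≠ 0 := by
        rintro rfl
        rw [zero_add] at huv
        exact hne (Prod.ext rfl huv)
      have hudeg : 0 < edeg u := by
        rcases Nat.eq_zero_or_pos (edeg u) with h0 | h0
        · exact absurd (edeg_eq_zero h0) hu
        · exact h0
      have hv : edeg v < d := by
        have : edeg u + edeg v = d := by
          rw [← edeg_add, huv, edeg_eq_degree b] at *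
          omega
        omega
      rw [hf v hv, mul_zero]
    · intro hmem
      exact absurd (Finset.HasAntidiagonal.mem_antidiagonal.mpr (zero_add b)) hmem
  · rw [if_neg hb, if_neg hb, smul_zero]

-- ===== a monomial ideal generated in degree d equals the span of ALL its degree-d monomials =====

lemma span_eq_Aset {K : Type} [Field K] {n d : ℕ} {I : Ideal (MvPolynomial (Fin n) K)}
    (hgen : GenBy I fun a => edeg a = d) :
    I = Ideal.span ((fun a => (monomial a (1 : K))) ''
      {a : Fin n →₀ ℕ | edeg a = d ∧ (monomial a (1 : K)) ∈ I}) := by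
  obtain ⟨G, hG, hGspan⟩ := hgen
  apply le_antisymm
  · conv_lhs => rw [hGspan]
    apply Ideal.span_mono
    apply Set.image_mono
    intro a ha
    exact ⟨hG a ha, hGspan ▸ Ideal.subset_span ⟨a, ha, rfl⟩⟩
  · rw [Ideal.span_le]
    rintro _ ⟨a, ha, rfl⟩
    exact ha.2

lemma genBy_le_lowVanish {K : Type} [Field K] {n d : ℕ} {I : Ideal (MvPolynomial (Fin n) K)}
    (hgen : GenBy I fun a => edeg a = d) : I ≤ lowVanish K n d := by
  obtain ⟨G, hG, hGspan⟩ := hgen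
  rw [hGspan, Ideal.span_le]
  rintro _ ⟨a, ha, rfl⟩
  intro b hb
  rw [coeff_monomial]
  rw [if_neg]
  rintro rfl
  rw [hG a ha] at hb
  exact lt_irrefl _ hb

lemma mu_eq_ncard {K : Type} [Field K] {n d : ℕ} {I : Ideal (MvPolynomial (Fin n) K)}
    (hgen : GenBy I fun a => edeg a = d) :
    mu I = {a : Fin n →₀ ℕ | edeg a = d ∧ (monomial a (1 : K)) ∈ I}.ncard := by
  classical
  set A := {a : Fin n →₀ ℕ | edeg a = d ∧ (monomial a (1 : K)) ∈ I} with hA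
  have hAfin : A.Finite := (finite_edeg_eq d).subset fun a ha => ha.1
  have hmoninj : Function.Injective fun a : Fin n →₀ ℕ => (monomial a (1 : K)) :=
    monomial_left_injective one_ne_zero
  have hspanA := span_eq_Aset hgen
  -- upper bound
  have hub : mu I ≤ A.ncard := by
    apply Nat.sInf_le
    refine ⟨hAfin.toFinset.image fun a => (monomial a (1 : K)), ?_, ?_⟩
    · rw [Finset.card_image_of_injective _ hmoninj, Set.ncard_eq_toFinset_card _ hAfin]
    · rw [hspanA, Finset.coe_image, Set.Finite.coe_toFinset]
  -- lower bound
  have hlb : A.ncard ≤ mu I := by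
    have hne : {m | ∃ G : Finset (MvPolynomial (Fin n) K), G.card = m ∧
        I = Ideal.span (G : Set _)}.Nonempty := by
      refine ⟨(hAfin.toFinset.image fun a => (monomial a (1 : K))).card, _, rfl, ?_⟩
      rw [hspanA, Finset.coe_image, Set.Finite.coe_toFinset]
    obtain ⟨F, hFcard, hFspan⟩ := Nat.sInf_mem hne
    set W : Submodule K (MvPolynomial (Fin n) K) :=
      Submodule.span K ((F.image fun f => homogeneousComponent d f : Finset _) : Set _) with hW
    have hmonW : ∀ a ∈ A, (monomial a (1 : K)) ∈ W := by
      intro a ha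
      have hmem : (monomial a (1 : K)) ∈ Ideal.span (F : Set (MvPolynomial (Fin n) K)) :=
        hFspan ▸ ha.2
      obtain ⟨c, -, hc⟩ := Submodule.mem_span_finset.mp hmem
      have hself : homogeneousComponent d (monomial a (1 : K)) = monomial a (1 : K) := by
        have : (monomial a (1 : K)) ∈ homogeneousSubmodule (Fin n) K d := by
          rw [mem_homogeneousSubmodule]
          exact isHomogeneous_monomial _ ((edeg_eq_degree a).trans ha.1)
        rw [homogeneousComponent_of_mem this, if_pos rfl]
      have hmemW : homogeneousComponent d (∑ f ∈ F, c f • f) ∈ W := by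
        rw [map_sum]
        apply Submodule.sum_mem
        intro f hfF
        have hflv : f ∈ lowVanish K n d :=
          genBy_le_lowVanish hgen (hFspan ▸ Ideal.subset_span hfF)
        rw [smul_eq_mul, homComp_mul_lowVanish (c f) f hflv]
        exact Submodule.smul_mem _ _ (Submodule.subset_span
          (by rw [Finset.coe_image]; exact ⟨f, hfF, rfl⟩))
      rw [hc, hself] at hmemW
      exact hmemW
    haveI : FiniteDimensional K W := by rw [hW]; infer_instance
    have hle : Submodule.span K ((fun a => (monomial a (1 : K))) '' A) ≤ W := by
      rw [Submodule.span_le]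
      rintro _ ⟨a, ha, rfl⟩
      exact hmonW a ha
    haveI : Fintype ((fun a => (monomial a (1 : K))) '' A) :=
      (hAfin.image _).fintype
    have hli : LinearIndependent K
        ((↑) : ((fun a => (monomial a (1 : K))) '' A) → MvPolynomial (Fin n) K) := by
      apply flip (LinearIndepOn.mono (v := id) (s := Set.range fun s => (monomial s (1 : K))))
      · exact Set.image_subset_range _ _
      · have := (basisMonomials (Fin n) K).linearIndependent
        rw [coe_basisMonomials] at this
        exact this.linearIndepOn_id
    have h1 : A.ncard = Module.finrank K
        (Submodule.span K ((fun a => (monomial a (1 : K))) '' A)) := by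
      rw [finrank_span_set_eq_card hli, ← Set.ncard_eq_toFinset_card',
        Set.ncard_image_of_injective _ hmoninj]
    have h2 : Module.finrank K W ≤ F.card := by
      calc Module.finrank K W ≤ (F.image fun f => homogeneousComponent d f).card :=
            finrank_span_finset_le_card _
        _ ≤ F.card := Finset.card_image_le
    calc A.ncard = _ := h1
      _ ≤ Module.finrank K W := Submodule.finrank_mono hle
      _ ≤ F.card := h2
      _ = mu I := hFcard
  omega

open scoped Pointwise

/-- Corollary `lex_ideals`(a). Suppose `I` and `I'` are lexsegment
ideals of `S = K[x_1,…,x_n]` generated by monomials of degree `d` and `d'` respectively,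
with `μ(I) = μ(I')` and `d' ≥ d`. Then `I' = x_1^{d'−d} · I`. -/
theorem lexsegment_eq_shift {K : Type} [Field K] {n d d' : ℕ} (hn : 0 < n)
    (I I' : Ideal (MvPolynomial (Fin n) K))
    (hlex : IsLexsegment I) (hlex' : IsLexsegment I')
    (hgen : GenBy I (fun a => edeg a = d)) (hgen' : GenBy I' (fun a => edeg a = d'))
    (hmu : mu I = mu I') (hdd : d ≤ d') :
    I' = Ideal.span {(X (⟨0, hn⟩ : Fin n) : MvPolynomial (Fin n) K) ^ (d' - d)} * I := by
  classical
  set x0 : Fin n := ⟨0, hn⟩ with hx0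
  set k := d' - d with hk
  have hd' : d' = d + k := by omega
  set A := {a : Fin n →₀ ℕ | edeg a = d ∧ (monomial a (1 : K)) ∈ I} with hA
  set A' := {a : Fin n →₀ ℕ | edeg a = d' ∧ (monomial a (1 : K)) ∈ I'} with hA'
  set σ : (Fin n →₀ ℕ) → (Fin n →₀ ℕ) := fun a => a + Finsupp.single x0 k with hσ
  have hσinj : Function.Injective σ := by
    intro a b h
    ext j
    have := congrArg (fun c => c j) h
    simp only [hσ, Finsupp.add_apply] at this
    omega
  have hσedeg : ∀ a, edeg (σ a) = edeg a + k := by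
    intro a
    rw [hσ]
    simp only
    rw [edeg_add, edeg_single]
  have hAup : ∀ a ∈ A, ∀ b, edeg b = d → lexGT b a → b ∈ A := by
    intro a ha b hb hlt
    exact ⟨hb, hlex.2 a b ha.2 (hb.trans ha.1.symm) hlt⟩
  have hA'up : ∀ a ∈ A', ∀ b, edeg b = d' → lexGT b a → b ∈ A' := by
    intro a ha b hb hlt
    exact ⟨hb, hlex'.2 a b ha.2 (hb.trans ha.1.symm) hlt⟩
  have hσAup : ∀ a ∈ σ '' A, ∀ b, edeg b = d' → lexGT b a → b ∈ σ '' A := by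
    rintro _ ⟨a, ha, rfl⟩ b hb hlt
    obtain ⟨i, hih, hilt⟩ := hlt
    have hx0i : x0 ≤ i := by rw [Fin.le_def]; exact Nat.zero_le _
    have hb0 : k ≤ b x0 := by
      rcases eq_or_lt_of_le hx0i with he | hlt'
      · have h2 : (σ a) x0 < b x0 := he ▸ hilt
        simp only [hσ, Finsupp.add_apply, Finsupp.single_eq_same] at h2
        omega
      · have hbeq : b x0 = (σ a) x0 := hih x0 hlt'
        simp only [hσ, Finsupp.add_apply, Finsupp.single_eq_same] at hbeq
        omega
    set b' := b - Finsupp.single x0 k with hb'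
    have hσb' : σ b' = b := by
      ext j
      simp only [hσ, hb', Finsupp.add_apply, Finsupp.tsub_apply, Finsupp.single_apply]
      by_cases hj : x0 = j
      · rw [if_pos hj]; rw [← hj]; omega
      · rw [if_neg hj]; omega
    have hb'deg : edeg b' = d := by
      have := hσedeg b'
      rw [hσb', hb] at this
      omega
    have hb'lex : lexGT b' a := by
      refine ⟨i, ?_, ?_⟩
      · intro j hj
        have hbj : b j = (σ a) j := hih j hj
        simp only [hσ, Finsupp.add_apply] at hbj
        simp only [hb', Finsupp.tsub_apply]
        omega
      · have : (σ a) i < b i := hilt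
        simp only [hσ, Finsupp.add_apply] at this
        simp only [hb', Finsupp.tsub_apply]
        omega
    exact ⟨b', hAup a ha b' hb'deg hb'lex, hσb'⟩
  have hmuI := mu_eq_ncard hgen
  have hmuI' := mu_eq_ncard hgen'
  have hcard : (σ '' A).ncard = A'.ncard := by
    rw [Set.ncard_image_of_injective _ hσinj, hA, hA', ← hmuI, ← hmuI']
    exact hmu
  have hAA' : σ '' A = A' := by
    refine upper_eq (d := d') ?_ (fun a ha => ha.1) hσAup hA'up hcard
    rintro _ ⟨a, ha, rfl⟩
    rw [hσedeg, ha.1, hd']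
  have hI := span_eq_Aset hgen
  have hI' := span_eq_Aset hgen'
  rw [← hA] at hI
  rw [← hA'] at hI'
  have himg : (fun a => (monomial a (1 : K))) '' (σ '' A) =
      {(X x0 : MvPolynomial (Fin n) K) ^ k} * ((fun a => (monomial a (1 : K))) '' A) := by
    rw [Set.singleton_mul, ← Set.image_comp, ← Set.image_comp]
    apply Set.image_congr
    intro a _
    simp only [Function.comp, hσ]
    rw [X_pow_eq_monomial, monomial_mul, one_mul, add_comm (Finsupp.single x0 k) a]
  rw [hI', ← hAA', himg, ← Ideal.span_mul_span', ← hI]
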